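/- Consider the continuous 2-homogeneous polynomial P : ℓ² → ℝ defined on the real Hilbert sequence space ℓ² (indexed by k ≥ 1) by P(x) = x₁² + Σ_{k=2}^∞ (k/(k+1)) x_k². Then: (i) for every x ∈ ℓ² with Σ_{k=1}^∞ x_k² ≤ 1 one has P(x) ≤ 1; (ii) P(e₁) = 1, where e₁ is the first standard unit vector, so ‖P‖ = 1 and P attains its norm; and (iii) P is not weakly sequentially continuous: the standard unit vectors (e_k)_{k≥1} converge weakly to 0 in ℓ², but P(e_k) = k/(k+1) → 1 ≠ 0 = P(0). -/

import Mathlib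

open Filter Topology

/-- The 2-homogeneous polynomial `P : ℓ² → ℝ`,
`P(x) = x₁² + ∑_{k ≥ 2} (k/(k+1)) x_k²` (here indexed over `ℕ`: the coefficient of
`(x 0)²` is `1` and that of `(x k)²` for `k ≥ 1` is `(k+1)/(k+2)`, which corresponds to
`j/(j+1)` for the original index `j = k+1 ≥ 2`). -/
noncomputable def Pfun (x : lp (fun _ : ℕ => ℝ) 2) : ℝ :=
  ∑' k : ℕ, (if k = 0 then (1 : ℝ) else ((k : ℝ) + 1) / ((k : ℝ) + 2)) * (x k) ^ 2

lemma coeff_nonneg (k : ℕ) :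
    0 ≤ (if k = 0 then (1 : ℝ) else ((k : ℝ) + 1) / ((k : ℝ) + 2)) := by
  split_ifs with h
  · norm_num
  · positivity

lemma coeff_le_one (k : ℕ) :
    (if k = 0 then (1 : ℝ) else ((k : ℝ) + 1) / ((k : ℝ) + 2)) ≤ 1 := by
  split_ifs with h
  · exact le_refl 1
  · rw [div_le_one (by positivity)]; linarith

lemma sq_summable (x : lp (fun _ : ℕ => ℝ) 2) : Summable (fun k => (x k) ^ 2) := by
  have h := (lp.memℓp x).summable (p := 2) (by norm_num)
  have : (fun i : ℕ => ‖x i‖ ^ (2 : ENNReal).toReal) = fun k => (x k) ^ 2 := by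
    funext k
    rw [show ((2 : ENNReal).toReal) = ((2 : ℕ) : ℝ) by norm_num, Real.rpow_natCast,
      Real.norm_eq_abs, sq_abs]
  rwa [this] at h

lemma Pfun_summable (x : lp (fun _ : ℕ => ℝ) 2) :
    Summable (fun k : ℕ =>
      (if k = 0 then (1 : ℝ) else ((k : ℝ) + 1) / ((k : ℝ) + 2)) * (x k) ^ 2) := by
  refine Summable.of_nonneg_of_le (fun k => ?_) (fun k => ?_) (sq_summable x)
  · exact mul_nonneg (coeff_nonneg k) (sq_nonneg _)
  · have := mul_le_mul_of_nonneg_right (coeff_le_one k) (sq_nonneg (x k))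
    simpa using this

lemma Pfun_single (m : ℕ) :
    Pfun (lp.single 2 m (1 : ℝ)) =
      (if m = 0 then (1 : ℝ) else ((m : ℝ) + 1) / ((m : ℝ) + 2)) := by
  unfold Pfun
  rw [tsum_eq_single m]
  · rw [lp.single_apply_self]; ring
  · intro k hk
    rw [lp.single_apply_ne 2 m 1 hk]
    ring

/-- Example 2.18(4): `P` as above satisfies (i) `P(x) ≤ 1` on the closed unit ball,
(ii) `P(e₁) = 1` with `‖e₁‖ ≤ 1`, so `‖P‖ = 1` and `P` attains its norm, and
(iii) `P` is not weakly sequentially continuous: the unit vectors `(e_k)` are weakly null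
but `P(e_k) → 1 ≠ 0 = P 0`. -/
theorem stmt19 :
    -- (i)
    (∀ x : lp (fun _ : ℕ => ℝ) 2, ‖x‖ ≤ 1 → Pfun x ≤ 1) ∧
    -- (ii)
    (‖(lp.single 2 0 (1 : ℝ) : lp (fun _ : ℕ => ℝ) 2)‖ ≤ 1 ∧
      Pfun (lp.single 2 0 (1 : ℝ)) = 1) ∧
    -- (iii): the standard unit vectors are weakly null ...
    (∀ φ : lp (fun _ : ℕ => ℝ) 2 →L[ℝ] ℝ,
      Filter.Tendsto (fun m : ℕ => φ (lp.single 2 m (1 : ℝ))) Filter.atTop (nhds 0)) ∧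
    -- ... but `P(e_m) → 1 ≠ 0 = P 0`
    Filter.Tendsto (fun m : ℕ => Pfun (lp.single 2 m (1 : ℝ))) Filter.atTop (nhds 1) ∧
    Pfun 0 = 0 := by
  refine ⟨?_, ⟨?_, ?_⟩, ?_, ?_, ?_⟩
  · -- (i)
    intro x hx
    have hsum : (∑' k : ℕ, (x k) ^ 2) = ‖x‖ ^ 2 := by
      have h := lp.norm_rpow_eq_tsum (p := 2) (by norm_num) x
      have h2 : ∀ y : ℝ, y ^ ((2 : ENNReal).toReal) = y ^ 2 := by
        intro y
        rw [show ((2 : ENNReal).toReal) = ((2 : ℕ) : ℝ) by norm_num, Real.rpow_natCast]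
      simp only [h2, Real.norm_eq_abs, sq_abs] at h
      exact h.symm
    have h1 : Pfun x ≤ ∑' k : ℕ, (x k) ^ 2 := by
      refine Summable.tsum_le_tsum (fun k => ?_) (Pfun_summable x) (sq_summable x)
      calc _ ≤ 1 * (x k) ^ 2 :=
            mul_le_mul_of_nonneg_right (coeff_le_one k) (sq_nonneg _)
        _ = (x k) ^ 2 := one_mul _
    have h2 : ‖x‖ ^ 2 ≤ 1 := by
      calc ‖x‖ ^ 2 ≤ 1 ^ 2 := by
            exact pow_le_pow_left₀ (norm_nonneg _) hx 2
        _ = 1 := one_pow 2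
    linarith [h1, hsum ▸ h1]
  · -- ‖e₁‖ ≤ 1
    have h := lp.norm_single (p := (2 : ENNReal)) (E := fun _ : ℕ => ℝ)
      (by norm_num) 0 (1 : ℝ)
    simp only [Real.norm_eq_abs] at h
    rw [h]
    norm_num
  · -- P(e₁) = 1
    rw [Pfun_single]; norm_num
  · -- weakly null
    intro φ
    obtain ⟨y, rfl⟩ := (InnerProductSpace.toDual ℝ (lp (fun _ : ℕ => ℝ) 2)).surjective φ
    have happ : ∀ m : ℕ,
        (InnerProductSpace.toDual ℝ (lp (fun _ : ℕ => ℝ) 2) y) (lp.single 2 m (1 : ℝ)) = y m := by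
      intro m
      rw [InnerProductSpace.toDual_apply_apply, lp.inner_single_right]
      simp [RCLike.inner_apply]
    simp only [happ]
    -- y m → 0
    have hs := sq_summable y
    have h0 : Filter.Tendsto (fun m => (y m) ^ 2) Filter.atTop (nhds 0) :=
      hs.tendsto_atTop_zero
    have : Filter.Tendsto (fun m => Real.sqrt ((y m) ^ 2)) Filter.atTop (nhds 0) := by
      have := (Real.continuous_sqrt.tendsto 0).comp h0
      simpa [Function.comp_def] using this
    rw [tendsto_zero_iff_norm_tendsto_zero]
    simpa [Real.sqrt_sq_eq_abs, Real.norm_eq_abs] using this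
  · -- P(e_m) → 1
    have h : ∀ᶠ m : ℕ in atTop,
        ((m : ℝ) + 1) / ((m : ℝ) + 2) = Pfun (lp.single 2 m (1 : ℝ)) := by
      filter_upwards [eventually_ge_atTop 1] with m hm
      rw [Pfun_single, if_neg (by omega)]
    refine Filter.Tendsto.congr' h ?_
    have h0 : Filter.Tendsto (fun m : ℕ => 1 / ((m : ℝ) + 2)) Filter.atTop (nhds 0) := by
      have := (tendsto_one_div_add_atTop_nhds_zero_nat (𝕜 := ℝ)).comp (tendsto_add_atTop_nat 1)
      apply this.congr
      intro m
      simp [Function.comp]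
      ring
    have hone : Filter.Tendsto (fun m : ℕ => 1 - 1 / ((m : ℝ) + 2)) Filter.atTop (nhds 1) := by
      simpa using (tendsto_const_nhds.sub h0)
    refine hone.congr (fun m => ?_)
    have hm2 : ((m : ℝ) + 2) ≠ 0 := by positivity
    field_simp
    ring
  · -- P 0 = 0
    unfold Pfun
    simp
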